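/- Let f ∈ Π̃(K) and let w be a word of weight n and depth d ≥ 1. Then f⁻¹[w] + f[w] lies in the ℤ-submodule of K generated by the products f[v_k]⋯f[v_1] over all factorizations w = v_k⋯v_1 (concatenation of words) into k ≥ 2 nonempty words. Consequently (since f[e0^m] = 0 for every m ≥ 1), f⁻¹[w] + f[w] lies in the ℤ-submodule of K generated by the products f[v_1]⋯f[v_k] with k ≥ 2, each v_j a word of depth between 1 and d−1, Σ_j depth(v_j) = d and Σ_j weight(v_j) = n. -/

import Mathlib

/-! Infrastructure: noncommutative formal power series in two letters `e0, e1`,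
their ring structure, exponential, inverse, substitution, shuffle products,
and the various words and submodules of coefficients used in the statements. -/

/-- Words over the alphabet `{e0, e1}`: lists over `Fin 2` (`0` is `e0`, `1` is `e1`),
read from left to right. -/
abbrev Word : Type := List (Fin 2)

/-- The depth of a word: its number of letters `e1`. -/
def depth (w : Word) : ℕ := w.count 1

/-- Noncommutative formal power series in `e0, e1` over `K`, encoded by their
coefficient functions on words. -/
def NCS (K : Type*) : Type _ := Word → K

namespace NCS

variable {K : Type*} [CommRing K]

instance : AddCommGroup (NCS K) := Pi.addCommGroup
instance : SMul K (NCS K) := ⟨fun c f => fun w => c * f w⟩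
instance : One (NCS K) := ⟨fun w => if w = [] then 1 else 0⟩
/-- Multiplication of noncommutative power series (Cauchy product on words). -/
instance : Mul (NCS K) := ⟨fun f g => fun w =>
  ∑ i ∈ Finset.range (w.length + 1), f (w.take i) * g (w.drop i)⟩

lemma mul_apply (f g : NCS K) (w : Word) :
    (f * g) w = ∑ i ∈ Finset.range (w.length + 1), f (w.take i) * g (w.drop i) := rfl

lemma add_apply (f g : NCS K) (w : Word) : (f + g) w = f w + g w := rfl

lemma smul_apply (c : K) (f : NCS K) (w : Word) : (c • f) w = c * f w := rfl

lemma zero_apply (w : Word) : (0 : NCS K) w = 0 := rfl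

lemma one_apply (w : Word) : (1 : NCS K) w = if w = [] then 1 else 0 := rfl

/-- Left shift of the coefficient function by a letter. -/
def shift (a : Fin 2) (f : NCS K) : NCS K := fun w => f (a :: w)

lemma mul_nil (f g : NCS K) : (f * g) [] = f [] * g [] := by
  simp [mul_apply]

lemma cons_mul (f g : NCS K) (a : Fin 2) (w : Word) :
    (f * g) (a :: w) = f [] * g (a :: w) + (shift a f * g) w := by
  show (∑ i ∈ Finset.range (w.length + 1 + 1), f ((a :: w).take i) * g ((a :: w).drop i)) = _
  rw [Finset.sum_range_succ']
  simp only [List.take_succ_cons, List.drop_succ_cons, List.take_zero, List.drop_zero]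
  rw [add_comm]
  rfl

private lemma zero_mul' (f : NCS K) : 0 * f = 0 := by
  funext w; simp [mul_apply, zero_apply]

private lemma mul_zero' (f : NCS K) : f * 0 = 0 := by
  funext w; simp [mul_apply, zero_apply]

private lemma add_mul' (f g h : NCS K) : (f + g) * h = f * h + g * h := by
  funext w
  simp [mul_apply, add_apply, add_mul, Finset.sum_add_distrib]

private lemma mul_add' (f g h : NCS K) : f * (g + h) = f * g + f * h := by
  funext w
  simp [mul_apply, add_apply, mul_add, Finset.sum_add_distrib]

private lemma smul_mul' (c : K) (f g : NCS K) : (c • f) * g = c • (f * g) := by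
  funext w
  simp [mul_apply, smul_apply, Finset.mul_sum, mul_assoc]

private lemma one_mul' (f : NCS K) : 1 * f = f := by
  funext w
  cases w with
  | nil => simp [mul_nil, one_apply]
  | cons a w =>
      have : shift a (1 : NCS K) = 0 := by
        funext v; show (if (a :: v : Word) = [] then (1:K) else 0) = 0; simp
      rw [cons_mul, this, zero_mul', zero_apply, one_apply]
      simp

private lemma mul_one' (f : NCS K) : f * 1 = f := by
  funext w
  induction w generalizing f with
  | nil => simp [mul_nil, one_apply]
  | cons a w ih =>
      rw [cons_mul, one_apply, ih]
      simp [shift]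

private lemma mul_assoc' (f g h : NCS K) : f * g * h = f * (g * h) := by
  funext w
  induction w generalizing f g h with
  | nil =>
      simp only [mul_nil]
      ring
  | cons a w ih =>
      have h1 : shift a (f * g) = f [] • shift a g + shift a f * g := by
        funext v
        show (f * g) (a :: v) = _
        rw [cons_mul]
        rfl
      have e1 : (f * g * h) (a :: w)
          = f [] * g [] * h (a :: w)
            + (f [] * ((shift a g * h) w) + ((shift a f * g) * h) w) := by
        rw [cons_mul, h1, add_mul', smul_mul', mul_nil, add_apply, smul_apply]
      have e2 : (f * (g * h)) (a :: w)
          = f [] * (g [] * h (a :: w) + (shift a g * h) w)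
            + (shift a f * (g * h)) w := by
        rw [cons_mul, cons_mul]
      rw [e1, e2, ih]
      ring

instance instRing : Ring (NCS K) where
  __ := (inferInstance : AddCommGroup (NCS K))
  __ := (inferInstance : Mul (NCS K))
  __ := (inferInstance : One (NCS K))
  left_distrib := mul_add'
  right_distrib := add_mul'
  zero_mul := zero_mul'
  mul_zero := mul_zero'
  mul_assoc := mul_assoc'
  one_mul := one_mul'
  mul_one := mul_one'

/-- The inverse of a noncommutative power series, given by the geometric series
`Σ_k (1-f)^k`.  For `f` with constant coefficient `1` (the only case used) this is
the genuine two-sided multiplicative inverse of `f`. -/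
instance : Inv (NCS K) :=
  ⟨fun f => fun w => ∑ k ∈ Finset.range (w.length + 1), ((1 - f) ^ k) w⟩

/-- The series `e0`. -/
def E0 : NCS K := fun w => if w = [0] then 1 else 0

/-- The series `e1`. -/
def E1 : NCS K := fun w => if w = [1] then 1 else 0

/-- The series `e∞ = -e0 - e1`. -/
def Einf : NCS K := -E0 - E1

/-- The finite set of all words of length at most `n`. -/
def wordsLe (n : ℕ) : Finset Word :=
  (Finset.range (n + 1)).biUnion fun k =>
    Finset.image (fun t : Fin k → Fin 2 => List.ofFn t) Finset.univ

/-- The product of the letters of `w` after the substitution `e0 ↦ a`, `e1 ↦ b`. -/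
def prodWord (a b : NCS K) (w : Word) : NCS K :=
  (w.map fun c => if c = 0 then a else b).prod

/-- Substitution `f(e0,e1) ↦ f(a,b)`: the image of `f` under the continuous algebra
endomorphism determined by `e0 ↦ a`, `e1 ↦ b` (for `a`, `b` with zero constant term). -/
def subst (a b : NCS K) (f : NCS K) : NCS K :=
  fun v => ∑ w ∈ wordsLe v.length, f w * prodWord a b w v

/-- The exponential series `exp a = Σ_k a^k/k!` (for `a` with zero constant term). -/
def expS {K : Type*} [Field K] (a : NCS K) : NCS K :=
  fun w => ∑ k ∈ Finset.range (w.length + 1), (Nat.factorial k : K)⁻¹ * (a ^ k) w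

end NCS

/-- The list of all shuffles of two words. -/
def shuffle : Word → Word → List Word
  | [], v => [v]
  | a :: u, [] => [a :: u]
  | a :: u, b :: v =>
      ((shuffle u (b :: v)).map fun w => a :: w) ++ ((shuffle (a :: u) v).map fun w => b :: w)
termination_by u v => u.length + v.length

namespace NCS

variable {K : Type*} [CommRing K]

/-- `f[u ⧢ v]`: the coefficient function `f` applied linearly to the shuffle `u ⧢ v`. -/
def shufApply (f : NCS K) (u v : Word) : K := ((shuffle u v).map fun w => f w).sum

/-- `f ∈ Π(K)`: group-like elements, i.e. solutions of the shuffle equations with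
constant coefficient `1`. -/
def IsPi (f : NCS K) : Prop :=
  f [] = 1 ∧ ∀ u v : Word, shufApply f u v = f u * f v

/-- `f ∈ Π̃(K)`: elements of `Π(K)` whose weight-one coefficients vanish. -/
def IsPiT (f : NCS K) : Prop := IsPi f ∧ f [0] = 0 ∧ f [1] = 0

end NCS

/-- The block `e0^{k-1} e1`. -/
def blk (k : ℕ) : Word := List.replicate (k - 1) 0 ++ [1]

/-- The word `e0^{s_d-1} e1 e0^{s_{d-1}-1} e1 ⋯ e0^{s_1-1} e1` (only the values
`s 1, …, s d` matter). -/
def wordW (d : ℕ) (s : ℕ → ℕ) : Word :=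
  (List.ofFn fun j : Fin d => blk (s (d - (j : ℕ)))).flatten

/-- The word `e0^{s_d-1} e1 ⋯ e0^{s_1-1} e1 e0^{s_0-1}`. -/
def word1 (d : ℕ) (s : ℕ → ℕ) : Word :=
  wordW d s ++ List.replicate (s 0 - 1) 0

/-- The word `W(a_d; a_{d-1}, …, a_1; a_0) = e0^{a_d} e1 e0^{a_{d-1}} e1 ⋯ e1 e0^{a_1} e1 e0^{a_0}`
of depth `d`. -/
def wordA (d : ℕ) (a : ℕ → ℕ) : Word :=
  List.replicate (a d) 0 ++
    (List.ofFn fun j : Fin d => (1 : Fin 2) :: List.replicate (a (d - 1 - (j : ℕ))) 0).flatten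

/-- `binom (−s, l) = (−1)^l · binom (s+l−1, l)`. -/
def nbinom (s l : ℕ) : ℤ := (-1) ^ l * ((s + l - 1).choose l)

/-- Extension of a tuple `t : Fin d → ℕ` to `ℕ → ℕ` so that index `i ∈ {1, …, d}`
reads `t (i-1)` and all other indices read `0`. -/
def extFin (d : ℕ) (t : Fin d → ℕ) : ℕ → ℕ :=
  fun i => if h : i - 1 < d ∧ 1 ≤ i then t ⟨i - 1, h.1⟩ else 0

namespace NCS

/-- The filtration `Fil_s(C_μ) = Σ_{s1+s2=s} (1/s1!)·ℤ·(μ/2)^{s2}` of `ℚ ⊆ K`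
(`μ ≠ 0` case; for `μ = 0` it reduces to `ℤ ⊆ K`). -/
def Fil {K : Type*} [Field K] (μ : K) (s : ℕ) : Submodule ℤ K :=
  Submodule.span ℤ
    {x : K | ∃ s1 s2 : ℕ, s1 + s2 = s ∧ x = (Nat.factorial s1 : K)⁻¹ * (μ / 2) ^ s2}

variable {K : Type*} [CommRing K]

/-- `M_D(f)`: the ℤ-submodule of `K` generated by the products `f[w_1]⋯f[w_k]`, `k ≥ 1`,
where each `w_j` is a word of depth between `1` and `D`. -/
def Msub (D : ℕ) (f : NCS K) : Submodule ℤ K :=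
  Submodule.span ℤ
    {x : K | ∃ l : List Word, l ≠ [] ∧ (∀ w ∈ l, 1 ≤ depth w ∧ depth w ≤ D) ∧
      x = (l.map fun w => f w).prod}

/-- `M^μ_D(f)`: as `Msub` but with coefficients in the filtration `Fil`. -/
def MsubFil {K : Type*} [Field K] (μ : K) (D : ℕ) (f : NCS K) : Submodule ℤ K :=
  Submodule.span ℤ
    {x : K | ∃ (l : List Word) (c : K), l ≠ [] ∧
      (∀ w ∈ l, 1 ≤ depth w ∧ depth w ≤ D) ∧
      c ∈ Fil μ ((l.map List.length).sum) ∧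
      x = c * (l.map fun w => f w).prod}

/-- The one-dimensional associator equations with `μ = 0`: duality (2-cycle), 3-cycle,
and the special automorphism equation. -/
def OneDim0 (Φ : NCS K) : Prop :=
  Φ * subst E1 E0 Φ = 1 ∧
  subst Einf E0 Φ * subst E1 Einf Φ * Φ = 1 ∧
  E0 + Φ⁻¹ * E1 * Φ + (subst E0 Einf Φ)⁻¹ * Einf * subst E0 Einf Φ = 0

/-- The one-dimensional associator equations with coupling constant `μ ≠ 0`: duality,
hexagon, and the equation of special automorphisms. -/
def OneDimMu {K : Type*} [Field K] (μ : K) (Φ : NCS K) : Prop :=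
  subst E1 E0 Φ = Φ⁻¹ ∧
  expS ((μ / 2) • E0) * subst Einf E0 Φ * expS ((μ / 2) • Einf) *
      subst E1 Einf Φ * expS ((μ / 2) • E1) * Φ = 1 ∧
  Φ⁻¹ * expS ((-μ) • E1) * Φ * expS ((-μ) • E0) =
    expS ((μ / 2) • E0) * (subst E0 Einf Φ)⁻¹ * expS (μ • Einf) *
      subst E0 Einf Φ * expS ((-(μ / 2)) • E0)

end NCS
section Aux
open NCS

variable {K : Type*} [CommRing K]

lemma NCS.sub_apply (f g : NCS K) (w : Word) : (f - g) w = f w - g w := rfl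

lemma NCS.neg_apply (f : NCS K) (w : Word) : (-f) w = -(f w) := rfl

/-- Sum over factorizations of `w` into `k` nonempty words of the products of
coefficients. -/
def facSum (f : NCS K) : ℕ → Word → K
  | 0, w => if w = [] then 1 else 0
  | (k+1), w => ∑ i ∈ Finset.range w.length, f (w.take (i+1)) * facSum f k (w.drop (i+1))

lemma one_sub_apply (f : NCS K) (hf1 : f [] = 1) (v : Word) :
    (1 - f) v = if v = [] then 0 else - f v := by
  rw [NCS.sub_apply, NCS.one_apply]
  split
  · next h => rw [h, hf1]; ring
  · ring

lemma pow_one_sub_apply (f : NCS K) (hf1 : f [] = 1) (k : ℕ) (w : Word) :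
    ((1 - f) ^ k) w = (-1) ^ k * facSum f k w := by
  induction k generalizing w with
  | zero => simp [facSum, NCS.one_apply, pow_zero]
  | succ k ih =>
      rw [pow_succ', NCS.mul_apply, Finset.sum_range_succ']
      have h0 : (1 - f) (w.take 0) * ((1 - f) ^ k) (w.drop 0) = 0 := by
        simp [one_sub_apply f hf1]
      rw [h0, add_zero]
      have : ∀ i ∈ Finset.range w.length,
          (1 - f) (w.take (i+1)) * ((1 - f) ^ k) (w.drop (i+1))
            = (-1) ^ (k+1) * (f (w.take (i+1)) * facSum f k (w.drop (i+1))) := by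
        intro i hi
        have hiw : i < w.length := Finset.mem_range.1 hi
        have hw : w ≠ [] := by
          intro h; rw [h] at hiw; simp at hiw
        have htk : w.take (i+1) ≠ [] := by
          rw [Ne, List.take_eq_nil_iff]; push_neg; exact ⟨Nat.succ_ne_zero i, hw⟩
        rw [one_sub_apply f hf1, if_neg htk, ih]
        ring
      rw [Finset.sum_congr rfl this, ← Finset.mul_sum]
      rfl

lemma facSum_one (f : NCS K) (w : Word) (hw : w ≠ []) : facSum f 1 w = f w := by
  have hl : 1 ≤ w.length := List.length_pos_iff.2 hw
  show (∑ i ∈ Finset.range w.length, f (w.take (i+1)) * facSum f 0 (w.drop (i+1))) = f w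
  rw [Finset.sum_eq_single_of_mem (w.length - 1)]
  · have h1 : w.length - 1 + 1 = w.length := by omega
    rw [h1, List.take_length, List.drop_length]
    simp [facSum]
  · exact Finset.mem_range.2 (by omega)
  · intro i hi hne
    have hiw : i < w.length := Finset.mem_range.1 hi
    have : w.drop (i+1) ≠ [] := by
      rw [Ne, List.drop_eq_nil_iff]; omega
    simp [facSum, this]

lemma mul_mem_span_of {c : K} {T S : Set K} (h : ∀ t ∈ T, c * t ∈ S) {x : K}
    (hx : x ∈ Submodule.span ℤ T) : c * x ∈ Submodule.span ℤ S := by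
  induction hx using Submodule.span_induction with
  | mem t ht => exact Submodule.subset_span (h t ht)
  | zero => simp
  | add a b _ _ ha hb => rw [mul_add]; exact add_mem ha hb
  | smul n a _ ha => rw [mul_smul_comm]; exact Submodule.smul_mem _ n ha

lemma facSum_mem_span (f : NCS K) (k : ℕ) (w : Word) :
    facSum f k w ∈ Submodule.span ℤ
      {x : K | ∃ l : List Word, l.length = k ∧ (∀ v ∈ l, v ≠ []) ∧
        l.flatten = w ∧ x = (l.map fun v => f v).prod} := by
  induction k generalizing w with
  | zero =>
      by_cases hw : w = []
      · subst hw
        refine Submodule.subset_span ⟨[], rfl, by simp, rfl, by simp [facSum]⟩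
      · have : facSum f 0 w = 0 := by simp [facSum, hw]
        rw [this]; exact Submodule.zero_mem _
  | succ k ih =>
      show (∑ i ∈ Finset.range w.length, f (w.take (i+1)) * facSum f k (w.drop (i+1))) ∈ _
      refine Submodule.sum_mem _ fun i hi => ?_
      have hiw : i < w.length := Finset.mem_range.1 hi
      have hw : w ≠ [] := by intro h; rw [h] at hiw; simp at hiw
      have htk : w.take (i+1) ≠ [] := by
        rw [Ne, List.take_eq_nil_iff]; push_neg; exact ⟨Nat.succ_ne_zero i, hw⟩
      refine mul_mem_span_of (fun t ht => ?_) (ih (w.drop (i+1)))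
      obtain ⟨l, hlen, hne, hfl, hprod⟩ := ht
      refine ⟨w.take (i+1) :: l, by simp [hlen], ?_, ?_, by simp [hprod]⟩
      · intro v hv
        rcases List.mem_cons.1 hv with h | h
        · rw [h]; exact htk
        · exact hne v h
      · simp [List.flatten_cons, hfl]

lemma shuffle_single_rep (c : Fin 2) (k : ℕ) :
    shuffle [c] (List.replicate k c) = List.replicate (k+1) (List.replicate (k+1) c) := by
  induction k with
  | zero => simp [shuffle, List.replicate]
  | succ k ih =>
      rw [List.replicate_succ, shuffle, ih]
      simp [shuffle, List.map_replicate, List.replicate_succ]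

lemma IsPiT.f_replicate {K : Type*} [Field K] [CharZero K] {f : NCS K} (hf : IsPiT f)
    (m : ℕ) (hm : 1 ≤ m) : f (List.replicate m 0) = 0 := by
  obtain ⟨k, rfl⟩ : ∃ k, m = k + 1 := ⟨m - 1, by omega⟩
  have h := hf.1.2 [0] (List.replicate k 0)
  rw [hf.2.1] at h
  unfold shufApply at h
  rw [shuffle_single_rep, List.map_replicate, List.sum_replicate] at h
  rw [zero_mul, nsmul_eq_mul] at h
  have hk : ((k : K) + 1) ≠ 0 := by
    have := Nat.cast_add_one_ne_zero (R := K) k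
    exact_mod_cast this
  have h' : ((k : K) + 1) * f (List.replicate (k+1) 0) = 0 := by push_cast at h; exact h
  exact (mul_eq_zero.1 h').resolve_left hk

lemma depth_zero_eq_replicate {v : Word} (hv : depth v = 0) :
    v = List.replicate v.length 0 := by
  rw [List.eq_replicate_iff]
  refine ⟨rfl, fun b hb => ?_⟩
  have h1 : b ≠ 1 := by
    intro h; subst h
    have := List.count_pos_iff.2 hb
    rw [depth] at hv; omega
  omega

lemma elem_le_sum_sub_one {l : List ℕ} (h1 : ∀ x ∈ l, 1 ≤ x) (h2 : 2 ≤ l.length)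
    {x : ℕ} (hx : x ∈ l) : x ≤ l.sum - 1 := by
  have hperm := List.perm_cons_erase hx
  have hsum : l.sum = x + (l.erase x).sum := by
    rw [hperm.sum_eq]; simp
  have hlen : 1 ≤ (l.erase x).length := by
    have := hperm.length_eq; simp at this; omega
  obtain ⟨y, hy⟩ := List.exists_mem_of_length_pos (by omega : 0 < (l.erase x).length)
  have hy1 : 1 ≤ y := h1 y (List.erase_subset hy)
  have hyle : y ≤ (l.erase x).sum := List.single_le_sum (fun a _ => Nat.zero_le a) y hy
  omega

end Aux

open NCS in
/-- modulo products of coefficients on shorter factorizations,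
the coefficients of `f⁻¹` are the negatives of those of `f`. -/
theorem stmt_8 {K : Type*} [Field K] [CharZero K] (f : NCS K) (hf : IsPiT f)
    (w : Word) (n d : ℕ) (hn : w.length = n) (hd : depth w = d) (hd1 : 1 ≤ d) :
    (f⁻¹ w + f w ∈ Submodule.span ℤ
        {x : K | ∃ l : List Word, 2 ≤ l.length ∧ (∀ v ∈ l, v ≠ []) ∧
          l.flatten = w ∧ x = (l.map fun v => f v).prod}) ∧
    (f⁻¹ w + f w ∈ Submodule.span ℤ
        {x : K | ∃ l : List Word, 2 ≤ l.length ∧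
          (∀ v ∈ l, 1 ≤ depth v ∧ depth v ≤ d - 1) ∧
          (l.map depth).sum = d ∧ (l.map List.length).sum = n ∧
          x = (l.map fun v => f v).prod}) := by
  subst hn; subst hd
  have hf1 : f [] = 1 := hf.1.1
  have hw : w ≠ [] := by
    intro h; subst h; simp [depth] at hd1
  have hlen1 : 1 ≤ w.length := List.length_pos_iff.2 hw
  have key : f⁻¹ w + f w
      = ∑ k ∈ Finset.Ico 2 (w.length + 1), (-1 : K) ^ k * facSum f k w := by
    have hinv : f⁻¹ w = ∑ k ∈ Finset.range (w.length + 1), ((1 - f) ^ k) w := rfl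
    have hset : Finset.range (w.length + 1)
        = insert 0 (insert 1 (Finset.Ico 2 (w.length + 1))) := by
      ext x
      simp only [Finset.mem_range, Finset.mem_insert, Finset.mem_Ico]
      omega
    rw [hinv, hset, Finset.sum_insert (by simp [Finset.mem_insert, Finset.mem_Ico]),
      Finset.sum_insert (by simp [Finset.mem_Ico])]
    rw [pow_one_sub_apply f hf1, pow_one_sub_apply f hf1]
    have h0 : facSum f 0 w = 0 := by simp [facSum, hw]
    rw [h0, facSum_one f w hw]
    have hcg : ∀ k ∈ Finset.Ico 2 (w.length + 1),
        ((1 - f) ^ k) w = (-1 : K) ^ k * facSum f k w :=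
      fun k _ => pow_one_sub_apply f hf1 k w
    rw [Finset.sum_congr rfl hcg]
    ring
  have hpart1 : f⁻¹ w + f w ∈ Submodule.span ℤ
      {x : K | ∃ l : List Word, 2 ≤ l.length ∧ (∀ v ∈ l, v ≠ []) ∧
        l.flatten = w ∧ x = (l.map fun v => f v).prod} := by
    rw [key]
    refine Submodule.sum_mem _ fun k hk => ?_
    have hk2 : 2 ≤ k := (Finset.mem_Ico.1 hk).1
    have hsub : {x : K | ∃ l : List Word, l.length = k ∧ (∀ v ∈ l, v ≠ []) ∧
        l.flatten = w ∧ x = (l.map fun v => f v).prod} ⊆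
        {x : K | ∃ l : List Word, 2 ≤ l.length ∧ (∀ v ∈ l, v ≠ []) ∧
          l.flatten = w ∧ x = (l.map fun v => f v).prod} := by
      rintro x ⟨l, hl, h2, h3, h4⟩
      exact ⟨l, hl ▸ hk2, h2, h3, h4⟩
    have hmem := Submodule.span_mono hsub (facSum_mem_span f k w)
    have heq : (-1 : K) ^ k * facSum f k w = ((-1 : ℤ) ^ k) • facSum f k w := by
      rw [zsmul_eq_mul]; push_cast; ring
    rw [heq]
    exact Submodule.smul_mem _ _ hmem
  refine ⟨hpart1, Submodule.span_le.2 ?_ hpart1⟩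
  rintro x ⟨l, hl2, hne, hfl, rfl⟩
  by_cases hall : ∀ v ∈ l, 1 ≤ depth v
  · have hdsum : (l.map depth).sum = depth w := by
      rw [← hfl]
      show _ = List.count 1 l.flatten
      rw [List.count_flatten]
      rfl
    have hlsum : (l.map List.length).sum = w.length := by
      rw [← hfl, List.length_flatten]
    refine Submodule.subset_span ⟨l, hl2, fun v hv => ⟨hall v hv, ?_⟩, hdsum, hlsum, rfl⟩
    have hones : ∀ x ∈ l.map depth, 1 ≤ x := by
      intro x hx
      obtain ⟨u, hu, rfl⟩ := List.mem_map.1 hx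
      exact hall u hu
    have hlen2 : 2 ≤ (l.map depth).length := by simpa using hl2
    have := elem_le_sum_sub_one hones hlen2 (List.mem_map.2 ⟨v, hv, rfl⟩)
    rwa [hdsum] at this
  · push_neg at hall
    obtain ⟨v, hv, hdv⟩ := hall
    have hdv0 : depth v = 0 := by omega
    have hfv : f v = 0 := by
      rw [depth_zero_eq_replicate hdv0]
      exact IsPiT.f_replicate hf _ (List.length_pos_iff.2 (hne v hv))
    have hzero : (l.map fun v => f v).prod = 0 :=
      List.prod_eq_zero (List.mem_map.2 ⟨v, hv, hfv⟩)
    rw [hzero]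
    exact Submodule.zero_mem _
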